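/- arXiv:1503.01385 — 5 statements merged into one kernel-verified Lean document; each statement's English description precedes it below -/
import Mathlib

section
/- Let G be an abelian group, p ∈ G with p ≠ 1, and M a subgroup of G with p ∉ M such that for every x ∉ M, p lies in the subgroup generated by M and x. Then the quotient group G/M embeds into ℝ/ℤ (equivalently, G/M admits an injective group homomorphism into the circle group). -/
noncomputable def ratCircleToRealCircle : AddCircle (1 : ℚ) →+ AddCircle (1 : ℝ) :=
  QuotientAddGroup.map _ _ (Rat.castHom ℝ).toAddMonoidHom (by
    rintro x ⟨n, rfl⟩
    exact ⟨n, by push_cast; simp⟩)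

lemma ratCircleToRealCircle_injective : Function.Injective ratCircleToRealCircle := by
  rw [injective_iff_map_eq_zero]
  intro a ha
  induction a using QuotientAddGroup.induction_on with
  | H q =>
    have : ((q : ℝ) : AddCircle (1 : ℝ)) = 0 := ha
    rw [AddCircle.coe_eq_zero_iff] at this ⊢
    obtain ⟨n, hn⟩ := this
    refine ⟨n, ?_⟩
    have h2 : (n : ℝ) = (q : ℝ) := by simpa using hn
    have : (n : ℚ) = q := by exact_mod_cast h2
    simpa using this

theorem stmt_3 {G : Type*} [AddCommGroup G] (p : G) (hp : p ≠ 0) (M : AddSubgroup G)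
    (hpM : p ∉ M) (hmax : ∀ x : G, x ∉ M → p ∈ M ⊔ AddSubgroup.closure {x}) :
    ∃ f : G ⧸ M →+ AddCircle (1 : ℝ), Function.Injective f := by
  set π : G →+ G ⧸ M := QuotientAddGroup.mk' M
  have hpbar : π p ≠ 0 := by
    simpa [π, QuotientAddGroup.eq_zero_iff] using hpM
  obtain ⟨c, hc⟩ := CharacterModule.exists_character_apply_ne_zero_of_ne_zero hpbar
  refine ⟨ratCircleToRealCircle.comp (c : G ⧸ M →+ AddCircle (1 : ℚ)),
    ratCircleToRealCircle_injective.comp ?_⟩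
  refine (injective_iff_map_eq_zero (c : G ⧸ M →+ AddCircle (1 : ℚ))).mpr ?_
  intro a ha
  induction a using QuotientAddGroup.induction_on with
  | H y =>
    by_contra hy0
    have hyM : y ∉ M := by
      simpa [QuotientAddGroup.eq_zero_iff] using hy0
    have hpmem := hmax y hyM
    rw [AddSubgroup.mem_sup] at hpmem
    obtain ⟨m, hm, z, hz, hmz⟩ := hpmem
    obtain ⟨n, rfl⟩ := AddSubgroup.mem_closure_singleton.mp hz
    have : π p = n • π y := by
      rw [← hmz]
      simp [π, map_add, map_zsmul, QuotientAddGroup.eq_zero_iff, hm,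
        (QuotientAddGroup.eq_zero_iff m).mpr hm]
    apply hc
    have ha' : c (π y) = 0 := ha
    rw [this, map_zsmul, ha', smul_zero]
end

section
/- Let G be an abelian group, p ∈ G with p ≠ 1, and M a subgroup of G with p ∉ M such that for every x ∉ M, p lies in the subgroup generated by M and x. Then the index of M in G is countable. -/
theorem stmt_4 {G : Type*} [AddCommGroup G] (p : G) (hp : p ≠ 0) (M : AddSubgroup G)
    (hpM : p ∉ M) (hmax : ∀ x : G, x ∉ M → p ∈ M ⊔ AddSubgroup.closure {x}) :
    Countable (G ⧸ M) := by
  set Q := G ⧸ M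
  set pbar : Q := QuotientAddGroup.mk p with hpbar
  have hpbar0 : pbar ≠ 0 := fun h => hpM ((QuotientAddGroup.eq_zero_iff p).1 h)
  -- every nonzero element of Q has pbar in its cyclic subgroup
  have key : ∀ x : Q, x ≠ 0 → ∃ n : ℤ, n • x = pbar := by
    intro x hx
    obtain ⟨g, rfl⟩ := QuotientAddGroup.mk_surjective x
    have hg : g ∉ M := fun h => hx ((QuotientAddGroup.eq_zero_iff g).2 h)
    obtain ⟨m, hm, z, hz, hmz⟩ := (AddSubgroup.mem_sup).1 (hmax g hg)
    obtain ⟨n, hn⟩ := AddSubgroup.mem_closure_singleton.1 hz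
    refine ⟨n, ?_⟩
    have h1 : (QuotientAddGroup.mk (m + n • g) : Q) = pbar := by rw [hn, hmz]
    rwa [QuotientAddGroup.mk_add, (QuotientAddGroup.eq_zero_iff m).2 hm, zero_add,
      QuotientAddGroup.mk_zsmul] at h1
  obtain ⟨c, hc⟩ := CharacterModule.exists_character_apply_ne_zero_of_ne_zero hpbar0
  have hinj : Function.Injective c := by
    rw [injective_iff_map_eq_zero]
    intro x hx
    by_contra hx0
    obtain ⟨n, hn⟩ := key x hx0
    apply hc
    rw [← hn, map_zsmul, hx, smul_zero]
  have hcnt : Countable (AddCircle (1 : ℚ)) := Quotient.countable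
  exact Function.Injective.countable hinj
end

section
/- Let G be a compact abelian topological group with Haar probability measure μ, let Q be a proper dense subgroup of G, let p ∈ G \ Q with p ≠ 1, and let M be a subgroup with Q ⊆ M, p ∉ M, and such that for every x ∉ M, p belongs to the subgroup generated by M and x. Then M is not Haar-measurable. -/
open MeasureTheory Pointwise

private lemma countable_of_roots {H : Type*} [CommGroup H] (c : H) (hc : c ≠ 1)
    (hroot : ∀ x : H, x ≠ 1 → ∃ n : ℤ, x ^ n = c) : Countable H := by
  -- `c` has finite order
  have hcfin : IsOfFinOrder c := by
    rcases eq_or_ne (c ^ 2) 1 with h2 | h2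
    · exact isOfFinOrder_iff_pow_eq_one.mpr ⟨2, by norm_num, h2⟩
    · obtain ⟨k, hk⟩ := hroot (c ^ 2) h2
      refine isOfFinOrder_iff_zpow_eq_one.mpr ⟨2 * k - 1, by omega, ?_⟩
      have h2k : c ^ (2 * k) = c := by
        rw [zpow_mul]
        exact_mod_cast hk
      rw [zpow_sub, h2k, zpow_one, mul_inv_cancel]
  -- every nontrivial element has finite order
  have htors : ∀ x : H, IsOfFinOrder x := by
    intro x
    rcases eq_or_ne x 1 with rfl | hx1
    · exact IsOfFinOrder.one
    obtain ⟨n, hn⟩ := hroot x hx1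
    have hn0 : n ≠ 0 := by rintro rfl; simp at hn; exact hc hn.symm
    refine isOfFinOrder_iff_zpow_eq_one.mpr ⟨n * (orderOf c), ?_, ?_⟩
    · have := orderOf_pos_iff.mpr hcfin
      exact mul_ne_zero hn0 (by exact_mod_cast this.ne')
    · rw [zpow_mul, hn]
      exact_mod_cast pow_orderOf_eq_one c
  -- solutions of x ^ r = 1 for prime r lie in the cyclic group generated by c
  have hprime : ∀ r : ℕ, r.Prime → ({x : H | x ^ r = 1}).Countable := by
    intro r hr
    have hsub : {x : H | x ^ r = 1} ⊆ insert 1 (Set.range fun a : ℤ => c ^ a) := by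
      intro x hx
      rcases eq_or_ne x 1 with rfl | hx1
      · exact Set.mem_insert _ _
      obtain ⟨k, hk⟩ := hroot x hx1
      have hxr : x ^ (r : ℤ) = 1 := by exact_mod_cast hx
      have hrk : ¬ ((r : ℤ) ∣ k) := by
        rintro ⟨t, rfl⟩
        rw [zpow_mul, hxr, one_zpow] at hk
        exact hc hk.symm
      have hcopn : Nat.Coprime r k.natAbs :=
        (Nat.Prime.coprime_iff_not_dvd hr).mpr (fun h => hrk (Int.natCast_dvd.mpr h))
      have hcop : IsCoprime (r : ℤ) k := by
        rw [Int.isCoprime_iff_gcd_eq_one]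
        simpa [Int.gcd] using hcopn
      obtain ⟨a, b, hab⟩ := hcop
      refine Set.mem_insert_iff.mpr (Or.inr ⟨b, ?_⟩)
      have : x = x ^ (a * (r : ℤ) + b * k) := by rw [hab, zpow_one]
      rw [this, zpow_add, mul_comm a ((r:ℤ)), zpow_mul, hxr, one_zpow, one_mul, mul_comm b k, zpow_mul, hk]
    exact ((Set.countable_range _).insert 1).mono hsub
  -- countability of n-torsion, by strong induction
  have key : ∀ n : ℕ, 0 < n → ({x : H | x ^ n = 1}).Countable := by
    intro n
    induction n using Nat.strong_induction_on with
    | _ n ih =>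
      intro hn
      rcases eq_or_lt_of_le (show 1 ≤ n from hn) with h1 | h2
      · have : {x : H | x ^ n = 1} = {1} := by
          ext x; simp [← h1]
        rw [this]; exact Set.countable_singleton 1
      · set r := n.minFac with hr
        have hrp : r.Prime := Nat.minFac_prime (by omega)
        have hrdvd : r ∣ n := n.minFac_dvd
        obtain ⟨m, hm⟩ := hrdvd
        have hrpos : 0 < r := hrp.pos
        have hmpos : 0 < m := by
          rcases Nat.eq_zero_or_pos m with h0 | h
          · subst h0; omega
          · exact h
        have hmlt : m < n := by
          have : 2 ≤ r := hrp.two_le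
          nlinarith
        have hcov : {x : H | x ^ n = 1} ⊆
            ⋃ y ∈ {y : H | y ^ m = 1}, {x : H | x ^ r = y} := by
          intro x hx
          refine Set.mem_iUnion₂.mpr ⟨x ^ r, ?_, rfl⟩
          show (x ^ r) ^ m = 1
          rw [← pow_mul, ← hm]; exact hx
        refine Set.Countable.mono hcov (Set.Countable.biUnion (ih m hmlt hmpos) ?_)
        intro y hy
        rcases Set.eq_empty_or_nonempty {x : H | x ^ r = y} with he | ⟨x₀, hx₀⟩
        · rw [he]; exact Set.countable_empty
        have hsub : {x : H | x ^ r = y} ⊆ (fun t => x₀ * t) '' {t : H | t ^ r = 1} := by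
          intro x hx
          refine ⟨x₀⁻¹ * x, ?_, by group⟩
          show (x₀⁻¹ * x) ^ r = 1
          rw [mul_pow, inv_pow, hx₀, hx]
          exact inv_mul_cancel y
        exact ((hprime r hrp).image _).mono hsub
  -- every element lies in some torsion set
  have : (Set.univ : Set H) ⊆ ⋃ n : ℕ, {x : H | x ^ (n + 1) = 1} := by
    intro x _
    obtain ⟨k, hk, hk1⟩ := isOfFinOrder_iff_pow_eq_one.mp (htors x)
    exact Set.mem_iUnion.mpr ⟨k - 1, by simpa [Nat.sub_add_cancel hk] using hk1⟩
  rw [← Set.countable_univ_iff]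
  exact Set.Countable.mono this (Set.countable_iUnion fun n => key (n + 1) n.succ_pos)

theorem stmt_10 {G : Type*} [CommGroup G] [TopologicalSpace G] [IsTopologicalGroup G]
    [CompactSpace G] [T2Space G] [MeasurableSpace G] [BorelSpace G]
    (μ : Measure G) [μ.IsHaarMeasure] [IsProbabilityMeasure μ]
    (Q : Subgroup G) (hQd : Dense (Q : Set G)) (hQp : Q ≠ ⊤)
    (p : G) (hp : p ≠ 1) (hpQ : p ∉ Q)
    (M : Subgroup G) (hQM : Q ≤ M) (hpM : p ∉ M)
    (hmax : ∀ x : G, x ∉ M → p ∈ M ⊔ Subgroup.closure {x}) :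
    ¬ NullMeasurableSet (M : Set G) μ := by
  intro hNM
  -- the quotient `G ⧸ M` is countable
  have hcq : Countable (G ⧸ M) := by
    refine countable_of_roots (QuotientGroup.mk p) ?_ ?_
    · intro h
      exact hpM ((QuotientGroup.eq_one_iff p).mp h)
    · intro y hy1
      obtain ⟨x, rfl⟩ := QuotientGroup.mk_surjective y
      have hxM : x ∉ M := fun h => hy1 ((QuotientGroup.eq_one_iff x).mpr h)
      obtain ⟨a, haM, b, hb, hab⟩ := Subgroup.mem_sup.mp (hmax x hxM)
      obtain ⟨n, hn⟩ := Subgroup.mem_closure_singleton.mp hb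
      refine ⟨n, ?_⟩
      have ha1 : (QuotientGroup.mk a : G ⧸ M) = 1 := (QuotientGroup.eq_one_iff a).mpr haM
      calc (QuotientGroup.mk x : G ⧸ M) ^ n = QuotientGroup.mk (x ^ n) := by
            rw [QuotientGroup.mk_zpow]
        _ = QuotientGroup.mk a * QuotientGroup.mk (x ^ n) := by rw [ha1, one_mul]
        _ = QuotientGroup.mk (a * x ^ n) := by rw [QuotientGroup.mk_mul]
        _ = QuotientGroup.mk p := by rw [hn, hab]
  rcases eq_or_ne (μ (M : Set G)) 0 with h0 | hne
  · -- measure-zero case: countably many null cosets cover `G`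
    have hcover : (Set.univ : Set G) ⊆ ⋃ q : G ⧸ M, (Quotient.out q) • (M : Set G) := by
      intro x _
      refine Set.mem_iUnion.mpr ⟨QuotientGroup.mk x, ?_⟩
      rw [Set.mem_smul_set_iff_inv_smul_mem]
      have : (QuotientGroup.mk (Quotient.out (QuotientGroup.mk x : G ⧸ M)) : G ⧸ M)
          = QuotientGroup.mk x := Quotient.out_eq _
      exact QuotientGroup.eq.mp this
    have hz : μ (⋃ q : G ⧸ M, (Quotient.out q) • (M : Set G)) = 0 := by
      refine measure_iUnion_null fun q => ?_
      have : (Quotient.out q) • (M : Set G)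
          = (fun x => (Quotient.out q)⁻¹ * x) ⁻¹' (M : Set G) := by
        ext x
        rw [Set.mem_smul_set_iff_inv_smul_mem]
        rfl
      rw [this, measure_preimage_mul, h0]
    have : μ (Set.univ : Set G) = 0 :=
      le_antisymm (le_trans (measure_mono hcover) hz.le) zero_le
    simp [measure_univ] at this
  · -- positive-measure case: `M` is open, hence closed, hence all of `G`
    obtain ⟨t, hts, htm, hteq⟩ := hNM.exists_measurable_subset_ae_eq
    have htpos : 0 < μ t := by
      rw [measure_congr hteq]
      exact hne.bot_lt
    have hnhds : (M : Set G) ∈ nhds (1 : G) := by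
      refine Filter.mem_of_superset (Measure.div_mem_nhds_one_of_haar_pos μ t htm htpos) ?_
      rintro y ⟨a, ha, b, hb, rfl⟩
      exact div_mem (hts ha) (hts hb)
    have hopen : IsOpen (M : Set G) := Subgroup.isOpen_of_mem_nhds M hnhds
    have hclosed : IsClosed (M : Set G) := Subgroup.isClosed_of_isOpen M hopen
    have hdense : Dense (M : Set G) := hQd.mono (SetLike.coe_subset_coe.mpr hQM)
    have : (M : Set G) = Set.univ := by
      rw [← hclosed.closure_eq]
      exact hdense.closure_eq
    exact hpM (by rw [← SetLike.mem_coe, this]; trivial)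
end

section
/- Let G be a compact topological group homeomorphic to 2^ω with Haar probability measure μ, and suppose X ⊆ G is a non-μ-measurable set with |X| < 2^ℵ₀. Then the subgroup H generated by X is non-measurable. -/
open MeasureTheory

open scoped Pointwise Cardinal

lemma mk_subgroup_closure_le {G : Type*} [Group G] (X : Set G) :
    #(Subgroup.closure X : Set G) ≤ max #X Cardinal.aleph0 := by
  set S : Set G := X ∪ X⁻¹ with hS
  have hsub : (Subgroup.closure X : Set G) ⊆
      Set.range (fun l : List S => (l.map (Subtype.val)).prod) := by
    intro x hx
    have hx' : x ∈ Submonoid.closure S := by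
      rw [← Subgroup.closure_toSubmonoid]
      exact hx
    obtain ⟨l, hl, hprod⟩ := Submonoid.exists_list_of_mem_closure hx'
    refine ⟨l.pmap (fun y hy => (⟨y, hy⟩ : S)) hl, ?_⟩
    simp only [List.map_pmap]
    simpa [List.pmap_eq_map] using hprod
  calc #(Subgroup.closure X : Set G)
      ≤ #(Set.range (fun l : List S => (l.map (Subtype.val)).prod)) :=
        Cardinal.mk_le_mk_of_subset hsub
    _ ≤ #(List S) := Cardinal.mk_range_le
    _ ≤ max Cardinal.aleph0 #S := Cardinal.mk_list_le_max S
    _ ≤ max #X Cardinal.aleph0 := by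
        have h1 : #S ≤ #X + #(X⁻¹ : Set G) := Cardinal.mk_union_le _ _
        have h2 : #(X⁻¹ : Set G) ≤ #X :=
          Cardinal.mk_le_of_injective (f := fun y : (X⁻¹ : Set G) =>
            (⟨(y : G)⁻¹, Set.mem_inv.mp y.2⟩ : X))
            (fun a b hab => Subtype.ext (inv_injective (congrArg Subtype.val hab)))
        have h3 : #S ≤ max #X Cardinal.aleph0 := by
          refine h1.trans ?_
          refine (add_le_add le_rfl h2).trans ?_
          exact (Cardinal.add_le_max _ _).trans (by simp)
        simpa [max_comm, max_assoc, max_left_comm] using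
          max_le (le_max_right _ _) h3

lemma continuum_le_mk_cantor : Cardinal.continuum ≤ #(ℕ → Bool) := by
  rw [← Cardinal.two_power_aleph0, Cardinal.mk_arrow, Cardinal.mk_bool, Cardinal.mk_nat]
  simp

/-- Every nonempty open subset of `ℕ → Bool` admits an injection from `ℕ → Bool`. -/
lemma exists_injection_open {V : Set (ℕ → Bool)} (hV : IsOpen V) (hne : V.Nonempty) :
    ∃ f : (ℕ → Bool) → (ℕ → Bool), Function.Injective f ∧ ∀ h, f h ∈ V := by
  obtain ⟨x, hx⟩ := hne
  obtain ⟨I, u, hu, hsub⟩ := isOpen_pi_iff.mp hV x hx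
  set N : ℕ := I.sup id + 1 with hN
  have hIN : ∀ i ∈ I, i < N := fun i hi =>
    Nat.lt_succ_of_le (Finset.le_sup (f := id) hi)
  set g : (ℕ → Bool) → (ℕ → Bool) := fun h n => if n < N then x n else h (n - N) with hg
  have hginj : Function.Injective g := by
    intro a b hab
    funext m
    have := congrFun hab (m + N)
    simpa [hg] using this
  have hgmem : ∀ h, g h ∈ V := by
    intro h
    apply hsub
    intro i hi
    simp only [hg, if_pos (hIN i hi)]
    exact (hu i hi).2
  exact ⟨g, hginj, hgmem⟩

theorem stmt_13 {G : Type*} [Group G] [TopologicalSpace G] [IsTopologicalGroup G]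
    [CompactSpace G] [T2Space G] [MeasurableSpace G] [BorelSpace G]
    (hhomeo : Nonempty (G ≃ₜ (ℕ → Bool)))
    (μ : Measure G) [μ.IsHaarMeasure] [IsProbabilityMeasure μ]
    (X : Set G) (hX : ¬ NullMeasurableSet X μ)
    (hcard : Cardinal.mk X < Cardinal.continuum) :
    ¬ NullMeasurableSet (Subgroup.closure X : Set G) μ := by
  intro hH
  set Hs : Set G := (Subgroup.closure X : Set G) with hHs
  rcases eq_zero_or_pos (μ Hs) with h0 | hpos
  · exact hX (NullMeasurableSet.of_null
      (measure_mono_null Subgroup.subset_closure h0))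
  · obtain ⟨t, ht_sub, ht_meas, ht_ae⟩ := hH.exists_measurable_subset_ae_eq
    have htpos : 0 < μ t := by
      rwa [measure_congr ht_ae]
    have hdiv : t / t ∈ nhds (1 : G) :=
      MeasureTheory.Measure.div_mem_nhds_one_of_haar_pos μ t ht_meas htpos
    have hdivsub : t / t ⊆ Hs := by
      rintro _ ⟨a, ha, b, hb, rfl⟩
      exact div_mem (ht_sub ha) (ht_sub hb)
    have hHnhds : Hs ∈ nhds (1 : G) := Filter.mem_of_superset hdiv hdivsub
    obtain ⟨U, hUsub, hUopen, hU1⟩ := mem_nhds_iff.mp hHnhds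
    -- U is a nonempty open set, so it has cardinality at least continuum
    obtain ⟨e⟩ := hhomeo
    have hVopen : IsOpen (e '' U) := e.isOpenMap U hUopen
    have hVne : (e '' U).Nonempty := ⟨e 1, Set.mem_image_of_mem e hU1⟩
    obtain ⟨f, hfinj, hfmem⟩ := exists_injection_open hVopen hVne
    have hkmem : ∀ h, e.symm (f h) ∈ U := by
      intro h
      obtain ⟨y, hyU, hye⟩ := hfmem h
      rw [← hye, Homeomorph.symm_apply_apply]
      exact hyU
    have hkinj : Function.Injective (fun h => (⟨e.symm (f h), hkmem h⟩ : U)) := by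
      intro a b hab
      exact hfinj (e.symm.injective (congrArg Subtype.val hab))
    have hUcard : Cardinal.continuum ≤ #U := by
      have h2 := (Cardinal.lift_le.mpr continuum_le_mk_cantor).trans
        (Cardinal.lift_mk_le'.mpr ⟨⟨_, hkinj⟩⟩)
      simpa [Cardinal.lift_continuum] using h2
    have hle : Cardinal.continuum ≤ #Hs :=
      hUcard.trans (Cardinal.mk_le_mk_of_subset hUsub)
    have hlt : #Hs < Cardinal.continuum :=
      (mk_subgroup_closure_le X).trans_lt
        (max_lt hcard Cardinal.aleph0_lt_continuum)
    exact absurd hle (not_le.mpr hlt)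
end

section
/- Let G be an infinite compact abelian metrizable group. Then G has a non-Haar-measurable subgroup. -/
open MeasureTheory


lemma countable_of_forall_mem_zpowers {A : Type*} [CommGroup A] (c : A) (hc : c ≠ 1)
    (h : ∀ g : A, g ≠ 1 → c ∈ Subgroup.zpowers g) : Countable A := by
  -- every element has finite order
  have tor : ∀ g : A, IsOfFinOrder g := by
    intro g
    by_contra hg
    have hinj : Function.Injective fun n : ℤ => g ^ n :=
      injective_zpow_iff_not_isOfFinOrder.mpr hg
    have hg1 : g ≠ 1 := by rintro rfl; exact hg IsOfFinOrder.one
    obtain ⟨n, hn⟩ := Subgroup.mem_zpowers_iff.mp (h g hg1)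
    have hn0 : n ≠ 0 := by rintro rfl; rw [zpow_zero] at hn; exact hc hn.symm
    set k : ℕ := n.natAbs + 1 with hk
    have hgk : g ^ k ≠ 1 := by
      intro hcon
      have h0 : ((k : ℕ) : ℤ) = 0 := hinj (by simpa [zpow_natCast] using hcon)
      omega
    obtain ⟨m, hm⟩ := Subgroup.mem_zpowers_iff.mp (h (g ^ k) hgk)
    have heq : g ^ ((k : ℤ) * m) = g ^ n := by
      rw [zpow_mul, zpow_natCast, hm, hn]
    have hdvd : (k : ℤ) ∣ n := ⟨m, (hinj heq).symm⟩
    have hdvd' : k ∣ n.natAbs := Int.natCast_dvd_natCast.mp (Int.dvd_natAbs.mpr hdvd)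
    have := Nat.le_of_dvd (Int.natAbs_pos.mpr hn0) hdvd'
    omega
  set q := orderOf c with hqdef
  have hq0 : 0 < q := (tor c).orderOf_pos
  have hq1 : q ≠ 1 := fun h1 => hc (orderOf_eq_one_iff.mp h1)
  have key : ∀ (g : A), g ≠ 1 → ∀ r : ℕ, r.Prime → r ∣ orderOf g → q ∣ r := by
    intro g hg r hr hdvd
    set d := g ^ (orderOf g / r) with hd
    have hme : orderOf g ≠ 0 := (tor g).orderOf_pos.ne'
    have hod : orderOf d = r := by
      rw [hd, (tor g).orderOf_pow, Nat.gcd_eq_right (Nat.div_dvd_of_dvd hdvd),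
        Nat.div_div_self hdvd hme]
    have hd1 : d ≠ 1 := by
      intro h1
      rw [h1, orderOf_one] at hod
      exact hr.one_lt.ne hod
    have := orderOf_dvd_of_mem_zpowers (h d hd1)
    rwa [hod] at this
  have hqprime : q.Prime := by
    obtain ⟨r, hr, hrdvd⟩ := Nat.exists_prime_and_dvd hq1
    rcases (Nat.Prime.eq_one_or_self_of_dvd hr q (key c hc r hr hrdvd)) with h1 | h2
    · exact absurd h1 hq1
    · rwa [h2]
  have pg : ∀ g : A, ∃ n : ℕ, g ^ q ^ n = 1 := by
    intro g
    rcases eq_or_ne g 1 with rfl | hg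
    · exact ⟨0, one_pow _⟩
    have hme : orderOf g ≠ 0 := (tor g).orderOf_pos.ne'
    have hfac : orderOf g = q ^ (orderOf g).primeFactorsList.length := by
      refine Nat.eq_prime_pow_of_unique_prime_dvd hme ?_
      intro d hd hdvd
      rcases Nat.Prime.eq_one_or_self_of_dvd hd q (key g hg d hd hdvd) with h1 | h2
      · exact absurd h1 hq1
      · exact h2.symm
    exact ⟨(orderOf g).primeFactorsList.length, by rw [← hfac]; exact pow_orderOf_eq_one g⟩
  have om1 : ∀ g : A, g ^ q = 1 → g ∈ Subgroup.zpowers c := by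
    intro g hgq
    rcases eq_or_ne g 1 with rfl | hg
    · exact one_mem _
    obtain ⟨k, hk⟩ := Subgroup.mem_zpowers_iff.mp (h g hg)
    have hgq' : g ^ (q : ℤ) = 1 := by rw [zpow_natCast]; exact hgq
    have hndvd : ¬ ((q : ℤ) ∣ k) := by
      rintro ⟨m, rfl⟩
      apply hc
      rw [← hk, zpow_mul, hgq', one_zpow]
    have hcop : IsCoprime (k : ℤ) (q : ℤ) := by
      rw [Int.isCoprime_iff_gcd_eq_one]
      have hgcd : (Int.gcd k q) ∣ q := by
        have : ((Int.gcd k (q:ℤ) : ℕ) : ℤ) ∣ (q : ℤ) := Int.gcd_dvd_right _ _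
        exact_mod_cast this
      rcases hqprime.eq_one_or_self_of_dvd _ hgcd with h1 | h2
      · exact h1
      · exfalso
        apply hndvd
        have : ((Int.gcd k (q:ℤ) : ℕ) : ℤ) ∣ k := Int.gcd_dvd_left _ _
        rwa [h2] at this
    obtain ⟨a, b, hab⟩ := hcop
    refine Subgroup.mem_zpowers_iff.mpr ⟨a, ?_⟩
    calc c ^ a = g ^ (a * k + b * q) := by
          rw [← hk, zpow_add, mul_comm a k, zpow_mul, mul_comm b (q : ℤ), zpow_mul,
            hgq', one_zpow, mul_one]
      _ = g := by rw [hab, zpow_one]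
  -- finiteness of the q^n-torsion sets
  have fin : ∀ n : ℕ, {g : A | g ^ q ^ n = 1}.Finite := by
    intro n
    induction n with
    | zero =>
      have : {g : A | g ^ q ^ 0 = 1} ⊆ {1} := by
        intro g hg
        simpa using hg
      exact Set.Finite.subset (Set.finite_singleton 1) this
    | succ n ih =>
      have hzc : (Subgroup.zpowers c : Set A).Finite := (tor c).finite_zpowers
      have key2 : {g : A | g ^ q ^ (n + 1) = 1} ⊆
          ⋃ y ∈ {g : A | g ^ q ^ n = 1}, {g : A | g ^ q ^ (n+1) = 1 ∧ g ^ q = y} := by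
        intro g hg
        refine Set.mem_biUnion ?_ ⟨hg, rfl⟩
        show (g ^ q) ^ q ^ n = 1
        rw [← pow_mul, ← pow_succ']
        exact hg
      refine Set.Finite.subset (Set.Finite.biUnion ih ?_) key2
      intro y hy
      rcases Set.eq_empty_or_nonempty {g : A | g ^ q ^ (n+1) = 1 ∧ g ^ q = y} with he | ⟨g0, hg0⟩
      · rw [he]; exact Set.finite_empty
      refine Set.Finite.subset (hzc.image (fun z => g0 * z)) ?_
      intro g hg
      have : (g0⁻¹ * g) ^ q = 1 := by
        rw [mul_pow, inv_pow, hg.2, hg0.2, inv_mul_cancel]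
      exact ⟨g0⁻¹ * g, om1 _ this, by group⟩
  -- conclude countability
  have : (Set.univ : Set A).Countable := by
    have : (Set.univ : Set A) ⊆ ⋃ n : ℕ, {g : A | g ^ q ^ n = 1} := by
      intro g _
      obtain ⟨n, hn⟩ := pg g
      exact Set.mem_iUnion.mpr ⟨n, hn⟩
    exact Set.Countable.mono this (Set.countable_iUnion fun n => (fin n).countable)
  exact Set.countable_univ_iff.mp this


lemma countable_closure_of_countable {G : Type*} [Group G] {s : Set G} (hs : s.Countable) :
    (Subgroup.closure s : Set G).Countable := by
  have h1 : (s ∪ s⁻¹ : Set G).Countable := hs.union (hs.preimage (inv_injective))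
  have hsub : (Subgroup.closure s : Set G) ⊆
      Set.range (fun l : List (s ∪ s⁻¹ : Set G) => (l.map Subtype.val).prod) := by
    intro x hx
    have hx' : x ∈ Submonoid.closure (s ∪ s⁻¹) := by
      rw [← Subgroup.closure_toSubmonoid]; exact hx
    obtain ⟨l, hl, rfl⟩ := Submonoid.exists_list_of_mem_closure hx'
    refine ⟨l.attach.map (fun y => ⟨y.1, hl y.1 y.2⟩), ?_⟩
    simp [List.map_map, Function.comp]
  have : Countable (s ∪ s⁻¹ : Set G) := h1.to_subtype
  exact Set.Countable.mono hsub (Set.countable_range _)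

open MeasureTheory Pointwise


theorem stmt_19 {G : Type*} [CommGroup G] [TopologicalSpace G] [IsTopologicalGroup G]
    [CompactSpace G] [T2Space G] [TopologicalSpace.MetrizableSpace G] [Infinite G]
    [MeasurableSpace G] [BorelSpace G]
    (μ : Measure G) [μ.IsHaarMeasure] [IsProbabilityMeasure μ] :
    ∃ H : Subgroup G, ¬ NullMeasurableSet (H : Set G) μ := by
  by_contra hcon
  push_neg at hcon
  -- singletons are null
  have h1 : ∀ x : G, μ {x} = μ {(1 : G)} := by
    intro x
    have hpre : ((x * ·) ⁻¹' {x} : Set G) = {1} := by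
      ext g; simp [eq_comm]
    rw [← hpre, measure_preimage_mul]
  have hsing : ∀ x : G, μ {x} = 0 := by
    by_contra hne
    push_neg at hne
    obtain ⟨x0, hx0⟩ := hne
    have hpos : μ {(1 : G)} ≠ 0 := by rw [← h1 x0]; exact hx0
    set f := Infinite.natEmbedding G with hf
    have hdisj : Pairwise (Function.onFun Disjoint fun n : ℕ => ({f n} : Set G)) :=
      fun i j hij => Set.disjoint_singleton.mpr fun h => hij (f.injective h)
    have hiu := measure_iUnion (μ := μ) hdisj (fun n => measurableSet_singleton (f n))
    have htop : ∑' n : ℕ, μ {f n} = ⊤ := by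
      have : ∀ n : ℕ, μ {f n} = μ {(1 : G)} := fun n => h1 (f n)
      rw [tsum_congr this]
      exact ENNReal.tsum_const_eq_top_of_ne_zero hpos
    rw [htop] at hiu
    exact (measure_ne_top μ _) hiu
  haveI : NullSingletonClass μ := ⟨hsing⟩
  have hGuncount : ¬ (Set.univ : Set G).Countable := by
    intro h
    have := Set.Countable.measure_zero h μ
    rw [measure_univ] at this
    exact one_ne_zero this
  -- a countable dense subgroup
  obtain ⟨s, hsc, hsd⟩ := TopologicalSpace.exists_countable_dense G
  set Q := Subgroup.closure s with hQ
  have hQc : (Q : Set G).Countable := countable_closure_of_countable hsc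
  have : ∃ p : G, p ∉ Q := by
    by_contra hp
    push_neg at hp
    exact hGuncount (hQc.mono fun x _ => hp x)
  obtain ⟨p, hp⟩ := this
  -- Zorn: a maximal subgroup avoiding p
  obtain ⟨M, hQM, hMmax⟩ :=
    zorn_le_nonempty₀ {H : Subgroup G | p ∉ H} (fun C hC hchain y hy =>
      ⟨sSup C, fun hmem => by
        obtain ⟨H, hH, hpH⟩ := (Subgroup.mem_sSup_of_directedOn ⟨y, hy⟩ hchain.directedOn).mp hmem
        exact hC hH hpH,
      fun z hz => le_sSup hz⟩) Q hp
  have hpM : p ∉ M := hMmax.1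
  have hMdense : Dense (M : Set G) := hsd.mono fun x hx => hQM (Subgroup.subset_closure hx)
  -- the quotient is countable
  haveI hquot : Countable (G ⧸ M) := by
    refine countable_of_forall_mem_zpowers ((p : G ⧸ M)) ?_ ?_
    · rw [Ne, QuotientGroup.eq_one_iff]; exact hpM
    · intro x hx
      obtain ⟨g, rfl⟩ := QuotientGroup.mk_surjective x
      have hgM : g ∉ M := fun hg => hx ((QuotientGroup.eq_one_iff g).mpr hg)
      have hpsup : p ∈ M ⊔ Subgroup.zpowers g := by
        by_contra hns
        have hle := hMmax.2 hns le_sup_left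
        exact hgM (hle (Subgroup.mem_sup_right (Subgroup.mem_zpowers g)))
      obtain ⟨y, hy, z, hz, hyz⟩ := Subgroup.mem_sup.mp hpsup
      obtain ⟨k, hk⟩ := Subgroup.mem_zpowers_iff.mp hz
      refine Subgroup.mem_zpowers_iff.mpr ⟨k, ?_⟩
      have hy1 : ((y : G ⧸ M)) = 1 := (QuotientGroup.eq_one_iff y).mpr hy
      calc ((g : G ⧸ M)) ^ k = ((g ^ k : G) : G ⧸ M) :=
            ((QuotientGroup.mk' M).map_zpow g k).symm
        _ = ((y * g ^ k : G) : G ⧸ M) := by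
            rw [QuotientGroup.mk_mul, hy1, one_mul]
        _ = ((p : G) : G ⧸ M) := by rw [← hyz, hk]
  rcases eq_or_ne (μ (M : Set G)) 0 with hzero | hpos
  · -- countably many null cosets cover G
    have huniv : (Set.univ : Set G) = ⋃ x : G ⧸ M, ((QuotientGroup.mk : G → G ⧸ M) ⁻¹' {x}) := by
      ext g; simp
    have hμuniv : μ Set.univ = 0 := by
      rw [huniv]
      refine measure_iUnion_null fun x => ?_
      obtain ⟨g, rfl⟩ := QuotientGroup.mk_surjective x
      have hset : ((QuotientGroup.mk : G → G ⧸ M) ⁻¹' {(g : G ⧸ M)}) =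
          ((g⁻¹ * ·) ⁻¹' (M : Set G)) := by
        ext x
        simp only [Set.mem_preimage, Set.mem_singleton_iff, SetLike.mem_coe]
        rw [QuotientGroup.eq]
        constructor
        · intro hm; simpa [mul_inv_rev] using M.inv_mem hm
        · intro hm; simpa [mul_inv_rev] using M.inv_mem hm
      rw [hset, measure_preimage_mul]
      exact hzero
    rw [measure_univ] at hμuniv
    exact one_ne_zero hμuniv
  · -- Steinhaus: M is open, hence closed, hence everything by density
    obtain ⟨t, hts, htm, hteq⟩ := (hcon M).exists_measurable_subset_ae_eq
    have htpos : 0 < μ t := by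
      rw [measure_congr hteq]
      exact hpos.bot_lt
    have hdiv := MeasureTheory.Measure.div_mem_nhds_one_of_haar_pos μ t htm htpos
    have hMnhds : (M : Set G) ∈ nhds (1 : G) := by
      refine Filter.mem_of_superset hdiv ?_
      intro x hx
      obtain ⟨a, ha, b, hb, rfl⟩ := Set.mem_div.mp hx
      exact div_mem (hts ha) (hts hb)
    have hopen := Subgroup.isOpen_of_mem_nhds M hMnhds
    have hclosed := Subgroup.isClosed_of_isOpen M hopen
    have huniv := hMdense.closure_eq
    rw [hclosed.closure_eq] at huniv
    exact hpM (by rw [← SetLike.mem_coe, huniv]; trivial)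
end
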